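/- Let X be a nonempty compact convex Polish space, Y a Polish space, and f : X × Y → ℝ continuous on the product and strictly convex in its first argument for every fixed y. Then the map sending y to the unique minimizer argmin_{x ∈ X} f(x,y) is continuous. -/

import Mathlib

/-- The argmin of a jointly continuous function that is strictly convex
in its first argument (over a nonempty compact convex Polish set) is continuous in the
second argument. -/
theorem stmt1 {E Y : Type*} [AddCommGroup E] [Module ℝ E] [TopologicalSpace E]
    [IsTopologicalAddGroup E] [ContinuousSMul ℝ E]
    [TopologicalSpace Y] [PolishSpace Y]
    (X : Set E) (hne : X.Nonempty) (hcomp : IsCompact X) (hconv : Convex ℝ X)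
    [PolishSpace X]
    (f : E → Y → ℝ)
    (hf : ContinuousOn (fun p : E × Y => f p.1 p.2) (X ×ˢ Set.univ))
    (hstrict : ∀ y : Y, ∀ x ∈ X, ∀ x' ∈ X, x ≠ x' → ∀ t : ℝ, 0 < t → t < 1 →
      f (t • x + (1 - t) • x') y < t * f x y + (1 - t) * f x' y)
    (g : Y → E)
    (hg : ∀ y, g y ∈ X ∧ ∀ x ∈ X, f (g y) y ≤ f x y) :
    Continuous g := by
  letI := TopologicalSpace.upgradeIsCompletelyMetrizable Y
  letI := TopologicalSpace.upgradeIsCompletelyMetrizable X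
  have hXc : CompactSpace X := isCompact_iff_compactSpace.mp hcomp
  -- uniqueness of the minimizer
  have huniq : ∀ y : Y, ∀ a ∈ X, (∀ x ∈ X, f a y ≤ f x y) → a = g y := by
    intro y a haX hamin
    by_contra hne'
    have h2 := hstrict y a haX (g y) (hg y).1 hne' (1/2) (by norm_num) (by norm_num)
    have hmem : ((1:ℝ)/2) • a + ((1:ℝ) - 1/2) • g y ∈ X :=
      hconv haX (hg y).1 (by norm_num : (0:ℝ) ≤ 1/2) (by norm_num : (0:ℝ) ≤ 1 - 1/2) (by norm_num)
    have hga := (hg y).2 a haX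
    have hm := (hg y).2 _ hmem
    have ham := hamin _ hmem
    linarith
  -- work in the subtype X
  set G : Y → X := fun y => ⟨g y, (hg y).1⟩ with hGdef
  have hGcont : Continuous G := by
    apply SeqContinuous.continuous
    intro u y hu
    apply Filter.tendsto_of_subseq_tendsto
    intro ns hns
    obtain ⟨a, -, φ, hφ, ha⟩ :=
      (isCompact_univ (X := X)).tendsto_subseq
        (x := fun n => G (u (ns n))) (fun n => Set.mem_univ _)
    refine ⟨φ, ?_⟩
    -- the subsequence of y's still tends to y
    have hys : Filter.Tendsto (fun n => u (ns (φ n))) Filter.atTop (nhds y) :=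
      hu.comp ((hns.comp hφ.tendsto_atTop))
    -- the pair tends to (a, y) within X ×ˢ univ
    have hval : Filter.Tendsto (fun n => (g (u (ns (φ n))) : E)) Filter.atTop (nhds (a : E)) :=
      (continuous_subtype_val.tendsto a).comp ha
    have hpair : Filter.Tendsto (fun n => ((g (u (ns (φ n))) : E), u (ns (φ n))))
        Filter.atTop (nhdsWithin ((a : E), y) (X ×ˢ Set.univ)) := by
      rw [tendsto_nhdsWithin_iff]
      refine ⟨hval.prodMk_nhds hys, Filter.Eventually.of_forall fun n => ?_⟩
      exact ⟨(hg _).1, Set.mem_univ _⟩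
    have hfa : Filter.Tendsto (fun n => f (g (u (ns (φ n)))) (u (ns (φ n))))
        Filter.atTop (nhds (f (a : E) y)) :=
      (hf ((a : E), y) ⟨a.2, Set.mem_univ _⟩).tendsto.comp hpair
    -- a is a minimizer at y
    have hamin : ∀ x ∈ X, f (a : E) y ≤ f x y := by
      intro x hx
      have hpairx : Filter.Tendsto (fun n => (x, u (ns (φ n))))
          Filter.atTop (nhdsWithin (x, y) (X ×ˢ Set.univ)) := by
        rw [tendsto_nhdsWithin_iff]
        refine ⟨(tendsto_const_nhds).prodMk_nhds hys, Filter.Eventually.of_forall fun n => ?_⟩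
        exact ⟨hx, Set.mem_univ _⟩
      have hfx : Filter.Tendsto (fun n => f x (u (ns (φ n))))
          Filter.atTop (nhds (f x y)) :=
        (hf (x, y) ⟨hx, Set.mem_univ _⟩).tendsto.comp hpairx
      exact le_of_tendsto_of_tendsto hfa hfx
        (Filter.Eventually.of_forall fun n => (hg _).2 x hx)
    have : (a : E) = g y := huniq y a a.2 hamin
    have haG : a = G y := Subtype.ext this
    rw [← haG]
    exact ha
  have : g = fun y => ((G y : X) : E) := rfl
  rw [this]
  exact continuous_subtype_val.comp hGcont
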